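/- Let t > 0 and let ψ : ℝ → ℝ be continuously differentiable on a neighborhood of [-1, 1] and even (ψ(-y) = ψ(y) for all y), with ψ'(y) ≤ 0 for all y ∈ (0, 1). Then for every x ∈ (0, 1), ∫_{-1}^{1} e^{-(y-x)²/(2t)} ψ'(y) dy ≤ 0. -/
import Mathlib


open MeasureTheory Real

/-- If `ψ` is `C¹` on a neighborhood of `[-1, 1]`, even, with `ψ' ≤ 0` on `(0, 1)`, then for
every `x ∈ (0, 1)`, `∫_{-1}^{1} e^{-(y-x)²/(2t)} ψ'(y) dy ≤ 0`. -/
theorem gauss_weighted_deriv_integral_nonpos (t : ℝ) (ht : 0 < t) (ψ : ℝ → ℝ)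
    (U : Set ℝ) (hU : IsOpen U) (hIccU : Set.Icc (-1 : ℝ) 1 ⊆ U)
    (hψ : ContDiffOn ℝ 1 ψ U) (heven : ∀ y, ψ (-y) = ψ y)
    (hd : ∀ y ∈ Set.Ioo (0 : ℝ) 1, deriv ψ y ≤ 0)
    (x : ℝ) (hx : x ∈ Set.Ioo (0 : ℝ) 1) :
    ∫ y in Set.Icc (-1 : ℝ) 1, Real.exp (-(y - x) ^ 2 / (2 * t)) * deriv ψ y ≤ 0 := by
  have hderiv_cont : ContinuousOn (deriv ψ) U :=
    hψ.continuousOn_deriv_of_isOpen hU le_rfl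
  -- the derivative of an even function is odd
  have hodd : ∀ y, deriv ψ (-y) = -deriv ψ y := by
    intro y
    have : deriv (fun z => ψ (-z)) y = deriv ψ y := by
      congr 1; ext z; exact heven z
    rw [deriv_comp_neg] at this
    linarith
  set g : ℝ → ℝ := fun y => Real.exp (-(y - x) ^ 2 / (2 * t)) * deriv ψ y with hg
  have hgcont : ContinuousOn g U := by
    apply ContinuousOn.mul _ hderiv_cont
    fun_prop
  have hint : ∀ a b : ℝ, a ∈ Set.Icc (-1:ℝ) 1 → b ∈ Set.Icc (-1:ℝ) 1 →
      IntervalIntegrable g volume a b := by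
    intro a b ha hb
    apply ContinuousOn.intervalIntegrable
    apply hgcont.mono
    intro z hz
    apply hIccU
    rcases le_total a b with h | h
    · rw [Set.uIcc_of_le h] at hz
      exact ⟨le_trans ha.1 hz.1, le_trans hz.2 hb.2⟩
    · rw [Set.uIcc_of_ge h] at hz
      exact ⟨le_trans hb.1 hz.1, le_trans hz.2 ha.2⟩
  have h1 : (∫ y in Set.Icc (-1:ℝ) 1, g y) = ∫ y in (-1:ℝ)..1, g y := by
    rw [MeasureTheory.integral_Icc_eq_integral_Ioc,
      intervalIntegral.integral_of_le (by norm_num : (-1:ℝ) ≤ 1)]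
  have h2 : (∫ y in (-1:ℝ)..1, g y) = (∫ y in (-1:ℝ)..0, g y) + ∫ y in (0:ℝ)..1, g y :=
    (intervalIntegral.integral_add_adjacent_intervals
      (hint (-1) 0 (by norm_num) (by norm_num)) (hint 0 1 (by norm_num) (by norm_num))).symm
  have h3 : (∫ y in (-1:ℝ)..0, g y) = ∫ y in (0:ℝ)..1, g (-y) := by
    rw [intervalIntegral.integral_comp_neg g]
    norm_num
  have h4 : (∫ y in (0:ℝ)..1, g (-y)) + (∫ y in (0:ℝ)..1, g y)
      = ∫ y in (0:ℝ)..1, (g (-y) + g y) := by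
    rw [intervalIntegral.integral_add _ (hint 0 1 (by norm_num) (by norm_num))]
    have := (hint (-1) 0 (by norm_num) (by norm_num)).comp_sub_left 0
    simpa using this.symm
  have h5 : (∫ y in (0:ℝ)..1, (g (-y) + g y)) ≤ 0 := by
    have key : 0 ≤ ∫ y in (0:ℝ)..1, -(g (-y) + g y) := by
      apply intervalIntegral.integral_nonneg_of_ae_restrict (by norm_num : (0:ℝ) ≤ 1)
      have hIco : ∀ y ∈ Set.Ico (0:ℝ) 1, 0 ≤ -(g (-y) + g y) := by
        intro y hy
        rcases eq_or_lt_of_le hy.1 with h0 | h0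
        · have hd0 : deriv ψ 0 = 0 := by have := hodd 0; simp at this; linarith
          simp [hg, ← h0, hd0]
        · simp only [hg]
          rw [hodd y]
          have hw : Real.exp (-(-y - x) ^ 2 / (2 * t)) ≤ Real.exp (-(y - x) ^ 2 / (2 * t)) := by
            apply Real.exp_le_exp.mpr
            apply div_le_div_of_nonneg_right _ (by linarith)
            nlinarith [hx.1]
          have hd' := hd y ⟨h0, hy.2⟩
          nlinarith [Real.exp_pos (-(-y - x) ^ 2 / (2 * t))]
      have hne : ∀ᵐ y ∂(volume.restrict (Set.Icc (0:ℝ) 1)), y ≠ (1:ℝ) := by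
        apply ae_restrict_of_ae
        refine MeasureTheory.ae_iff.mpr ?_
        have : {y : ℝ | ¬ y ≠ 1} = {1} := by ext z; simp
        rw [this]; exact Real.volume_singleton
      filter_upwards [ae_restrict_mem measurableSet_Icc, hne] with y hy hy1
      exact hIco y ⟨hy.1, lt_of_le_of_ne hy.2 hy1⟩
    rwa [intervalIntegral.integral_neg, neg_nonneg] at key
  calc (∫ y in Set.Icc (-1:ℝ) 1, Real.exp (-(y - x) ^ 2 / (2 * t)) * deriv ψ y)
      = ∫ y in (0:ℝ)..1, (g (-y) + g y) := by rw [h1, h2, h3, h4]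
    _ ≤ 0 := h5
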